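/- Let α ∈ [1,2), s ∈ ℝ, δ > 0 and ε ∈ (0,1). For N ≥ 2 set γ = N^{−(α+δ)}, Q₁⁺ = [γ/2, γ] × [γ^ε, 2γ^ε], Q₂⁺ = [N, N+γ] × [−γ^ε, −γ^ε/2], Q₁⁻ = −Q₁⁺, Q₂⁻ = −Q₂⁺, and let f_N ∈ L²(ℝ²) be the function whose Fourier transform is F(f_N)(ξ,μ) = γ^{−(1+ε)/2} (1_{Q₁⁺}(ξ,μ) + 1_{Q₁⁻}(ξ,μ)) + γ^{−(1+ε)/2} N^{−αs} (1_{Q₂⁺}(ξ,μ) + 1_{Q₂⁻}(ξ,μ)). Then there is a constant C = C(α,s,δ,ε) > 0 such that ‖f_N‖_{E^s} ≤ C for every N ≥ 2. -/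

import Mathlib

open MeasureTheory Set
open scoped ENNReal

noncomputable section

/-- The weight `⟨|ξ|^α + μ²⟩^s` defining the `E^s` norm on the Fourier side. -/
def wgt (α s : ℝ) (ζ : ℝ × ℝ) : ℝ := (1 + (|ζ.1| ^ α + ζ.2 ^ 2) ^ 2) ^ (s / 2)

lemma wgt_meas (α s : ℝ) : Measurable (wgt α s) := by
  unfold wgt; fun_prop

lemma wgt_nonneg (α s : ℝ) (ζ : ℝ × ℝ) : 0 ≤ wgt α s ζ := by
  unfold wgt; positivity

lemma wgt_neg (α s : ℝ) (ζ : ℝ × ℝ) : wgt α s (-ζ) = wgt α s ζ := by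
  unfold wgt; simp

/-- key elementary estimate: if `t² ≤ y ≤ 26 t²` with `t ≥ 1` then
`y^(s/2) t^(-s) ≤ 26^(|s|/2)`. -/
lemma key_est (s t y : ℝ) (ht : 1 ≤ t) (h1 : t^2 ≤ y) (h2 : y ≤ 26*t^2) :
    y ^ (s/2) * t ^ (-s) ≤ (26:ℝ) ^ (|s|/2) := by
  have ht' : (0:ℝ) < t := lt_of_lt_of_le one_pos ht
  have hy : (0:ℝ) < y := lt_of_lt_of_le (by positivity) h1
  have e2 : ((t:ℝ)^2) ^ (s/2) = t ^ s := by
    rw [← Real.rpow_natCast t 2, ← Real.rpow_mul ht'.le]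
    push_cast
    ring_nf
  have ts : t ^ s * t ^ (-s) = 1 := by
    rw [← Real.rpow_add ht']; simp
  have htn : 0 ≤ t ^ (-s) := Real.rpow_nonneg ht'.le _
  rcases le_or_gt 0 s with hs | hs
  · rw [abs_of_nonneg hs]
    have hb : y ^ (s/2) ≤ (26*t^2) ^ (s/2) :=
      Real.rpow_le_rpow hy.le h2 (by positivity)
    have e : ((26:ℝ)*t^2) ^ (s/2) = 26^(s/2) * t^s := by
      rw [Real.mul_rpow (by norm_num) (by positivity), e2]
    calc y^(s/2)*t^(-s) ≤ 26^(s/2)*t^s*t^(-s) := by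
          rw [← e]; exact mul_le_mul_of_nonneg_right hb htn
      _ = 26^(s/2) := by rw [mul_assoc, ts, mul_one]
  · rw [abs_of_neg hs]
    have hb : y ^ (s/2) ≤ (t^2) ^ (s/2) :=
      Real.rpow_le_rpow_of_nonpos (by positivity) h1 (by linarith)
    calc y^(s/2)*t^(-s) ≤ t^s*t^(-s) := by
          rw [← e2]; exact mul_le_mul_of_nonneg_right hb htn
      _ = 1 := ts
      _ ≤ (26:ℝ)^(-s/2) := Real.one_le_rpow (by norm_num) (by linarith)

/-- `L²` bound for a single indicator piece. -/
lemma piece (α s c M K : ℝ) (S : Set (ℝ × ℝ)) (hS : MeasurableSet S)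
    (hM : 0 ≤ M) (hbound : ∀ ζ ∈ S, |wgt α s ζ * c| ≤ M)
    (v : ℝ) (hv : 0 ≤ v) (hvol : volume S = ENNReal.ofReal v)
    (hK : M * v ^ ((1:ℝ)/2) ≤ K) :
    eLpNorm (S.indicator fun ζ => wgt α s ζ * c) 2 volume ≤ ENNReal.ofReal K := by
  calc eLpNorm (S.indicator fun ζ => wgt α s ζ * c) 2 volume
      ≤ eLpNorm (S.indicator fun _ : ℝ × ℝ => M) 2 volume := by
        refine eLpNorm_mono fun ζ => ?_
        by_cases h : ζ ∈ S
        · simp only [Set.indicator_of_mem h, Real.norm_eq_abs]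
          rw [abs_of_nonneg hM]; exact hbound ζ h
        · simp [Set.indicator_of_notMem h]
    _ = ↑‖M‖₊ * (volume S) ^ (1 / (2:ℝ≥0∞).toReal) :=
        eLpNorm_indicator_const hS two_ne_zero ENNReal.ofNat_ne_top
    _ = ENNReal.ofReal M * ENNReal.ofReal v ^ ((1:ℝ)/2) := by
        rw [hvol, show ((‖M‖₊ : ℝ≥0∞)) = ENNReal.ofReal M from Real.enorm_eq_ofReal hM]; norm_num
    _ = ENNReal.ofReal (M * v ^ ((1:ℝ)/2)) := by
        rw [ENNReal.ofReal_mul hM, ENNReal.ofReal_rpow_of_nonneg hv (by norm_num)]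
    _ ≤ ENNReal.ofReal K := ENNReal.ofReal_le_ofReal hK

lemma vol_Icc_prod (a b c d : ℝ) (hab : a ≤ b) (hcd : c ≤ d) :
    volume (Icc a b ×ˢ Icc c d) = ENNReal.ofReal ((b-a)*(d-c)) := by
  rw [show (volume : Measure (ℝ × ℝ)) = (volume : Measure ℝ).prod volume from rfl,
    Measure.prod_prod, Real.volume_Icc, Real.volume_Icc,
    ← ENNReal.ofReal_mul (by linarith)]

lemma neg_Icc_prod (a b c d : ℝ) :
    -(Icc a b ×ˢ Icc c d) = Icc (-b) (-a) ×ˢ Icc (-d) (-c) := by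
  rw [show -(Icc a b ×ˢ Icc c d) = (-Icc a b) ×ˢ (-Icc c d) from rfl, neg_Icc, neg_Icc]

lemma ind_mul (S : Set (ℝ × ℝ)) (g : ℝ × ℝ → ℝ) (c : ℝ) (ζ : ℝ × ℝ) :
    S.indicator (fun ζ => g ζ * c) ζ = g ζ * c * S.indicator (fun _ => (1:ℝ)) ζ := by
  by_cases h : ζ ∈ S <;> simp [h]

set_option maxHeartbeats 1000000 in
/-- `‖f_N‖_{E^s} ≤ C`, where `f_N` is given through its Fourier transform by the
indicator formula; the `E^s` norm is computed on the Fourier side. -/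
theorem stmt19 (α : ℝ) (hα : α ∈ Ico (1:ℝ) 2) (s δ ε : ℝ) (hδ : 0 < δ)
    (hε : ε ∈ Ioo (0:ℝ) 1) :
    ∃ C > (0:ℝ), ∀ N : ℝ, 2 ≤ N → ∀ γ : ℝ, γ = N ^ (-(α + δ)) →
      eLpNorm (fun ζ : ℝ × ℝ =>
          wgt α s ζ *
            (γ ^ (-((1 + ε) / 2)) *
              ((Icc (γ / 2) γ ×ˢ Icc (γ ^ ε) (2 * γ ^ ε)).indicator (fun _ => (1:ℝ)) ζ +
               (-(Icc (γ / 2) γ ×ˢ Icc (γ ^ ε) (2 * γ ^ ε))).indicator (fun _ => (1:ℝ)) ζ) +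
             γ ^ (-((1 + ε) / 2)) * N ^ (-(α * s)) *
              ((Icc N (N + γ) ×ˢ Icc (-(γ ^ ε)) (-(γ ^ ε) / 2)).indicator (fun _ => (1:ℝ)) ζ +
               (-(Icc N (N + γ) ×ˢ Icc (-(γ ^ ε)) (-(γ ^ ε) / 2))).indicator
                 (fun _ => (1:ℝ)) ζ))) 2 volume
        ≤ ENNReal.ofReal C := by
  obtain ⟨hα1, hα2⟩ := hα
  obtain ⟨hε0, hε1⟩ := hε
  set K : ℝ := (26:ℝ) ^ (|s|/2) with hKdef
  have hK0 : 0 < K := Real.rpow_pos_of_pos (by norm_num) _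
  refine ⟨4*K, by positivity, ?_⟩
  intro N hN γ hγ
  have hN0 : (0:ℝ) < N := by linarith
  have hγ0 : 0 < γ := hγ ▸ Real.rpow_pos_of_pos hN0 _
  have hγ1 : γ ≤ 1 := hγ ▸ Real.rpow_le_one_of_one_le_of_nonpos (by linarith) (by linarith)
  have hγε0 : 0 < γ ^ ε := Real.rpow_pos_of_pos hγ0 _
  have hγε1 : γ ^ ε ≤ 1 := Real.rpow_le_one hγ0.le hγ1 hε0.le
  set c₁ : ℝ := γ ^ (-((1 + ε) / 2)) with hc₁def
  have hc₁0 : 0 < c₁ := Real.rpow_pos_of_pos hγ0 _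
  set n : ℝ := N ^ (-(α * s)) with hndef
  have hn0 : 0 < n := Real.rpow_pos_of_pos hN0 _
  set S₁ : Set (ℝ × ℝ) := Icc (γ / 2) γ ×ˢ Icc (γ ^ ε) (2 * γ ^ ε) with hS₁def
  set S₂ : Set (ℝ × ℝ) := Icc N (N + γ) ×ˢ Icc (-(γ ^ ε)) (-(γ ^ ε) / 2) with hS₂def
  have hS₁m : MeasurableSet S₁ := measurableSet_Icc.prod measurableSet_Icc
  have hS₂m : MeasurableSet S₂ := measurableSet_Icc.prod measurableSet_Icc
  -- decompose the function as a sum of four indicator functions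
  have hfe : (fun ζ : ℝ × ℝ =>
          wgt α s ζ *
            (c₁ * (S₁.indicator (fun _ => (1:ℝ)) ζ + (-S₁).indicator (fun _ => (1:ℝ)) ζ) +
             c₁ * n * (S₂.indicator (fun _ => (1:ℝ)) ζ + (-S₂).indicator (fun _ => (1:ℝ)) ζ)))
      = (S₁.indicator fun ζ => wgt α s ζ * c₁) + ((-S₁).indicator fun ζ => wgt α s ζ * c₁)
        + ((S₂.indicator fun ζ => wgt α s ζ * (c₁ * n))
            + ((-S₂).indicator fun ζ => wgt α s ζ * (c₁ * n))) := by
    funext ζ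
    simp only [Pi.add_apply]
    rw [ind_mul, ind_mul, ind_mul, ind_mul]
    ring
  rw [hfe]
  -- pointwise weight bounds
  have hwb1 : ∀ ζ ∈ S₁, wgt α s ζ ≤ K := by
    intro ζ hζ
    obtain ⟨h1, h2⟩ := hζ
    rw [mem_Icc] at h1 h2
    have hx1 : |ζ.1| ≤ 1 := abs_le.mpr ⟨by linarith, by linarith⟩
    have ha : |ζ.1| ^ α ≤ 1 := Real.rpow_le_one (abs_nonneg _) hx1 (by linarith)
    have ha0 : 0 ≤ |ζ.1| ^ α := Real.rpow_nonneg (abs_nonneg _) _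
    have hb : ζ.2 ^ 2 ≤ 4 := by nlinarith
    have hb0 : 0 ≤ ζ.2 ^ 2 := sq_nonneg _
    have := key_est s 1 (1 + (|ζ.1| ^ α + ζ.2 ^ 2) ^ 2) le_rfl (by nlinarith) (by nlinarith)
    simpa [wgt, Real.one_rpow] using this
  have hwb2 : ∀ ζ ∈ S₂, wgt α s ζ * n ≤ K := by
    intro ζ hζ
    obtain ⟨h1, h2⟩ := hζ
    rw [mem_Icc] at h1 h2
    set t : ℝ := N ^ α with htdef
    have ht1 : 1 ≤ t := Real.one_le_rpow (by linarith) (by linarith)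
    have habs : |ζ.1| = ζ.1 := abs_of_nonneg (by linarith)
    have hlo : t ≤ |ζ.1| ^ α := by
      rw [habs]; exact Real.rpow_le_rpow hN0.le h1.1 (by linarith)
    have hhi : |ζ.1| ^ α ≤ 4 * t := by
      rw [habs]
      calc ζ.1 ^ α ≤ (2*N) ^ α :=
            Real.rpow_le_rpow (by linarith) (by linarith) (by linarith)
        _ = 2 ^ α * N ^ α := Real.mul_rpow (by norm_num) hN0.le
        _ ≤ 4 * t := by
            have h2a : (2:ℝ) ^ α ≤ 4 := by
              calc (2:ℝ) ^ α ≤ (2:ℝ) ^ (2:ℝ) :=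
                    Real.rpow_le_rpow_of_exponent_le one_le_two hα2.le
                _ = 4 := by
                    rw [show (2:ℝ) = ((2:ℕ):ℝ) from by norm_num, Real.rpow_natCast]
                    norm_num
            have ht0 : 0 ≤ t := by linarith
            nlinarith
    have hb : ζ.2 ^ 2 ≤ 1 := by nlinarith
    have hb0 : 0 ≤ ζ.2 ^ 2 := sq_nonneg _
    have hkey := key_est s t (1 + (|ζ.1| ^ α + ζ.2 ^ 2) ^ 2) ht1
      (by nlinarith) (by nlinarith)
    have htn : t ^ (-s) = n := by
      rw [htdef, hndef, ← Real.rpow_mul hN0.le, mul_neg]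
    rw [htn] at hkey
    simpa [wgt] using hkey
  -- common value of the product volume
  have hv0 : 0 ≤ γ/2 * γ^ε := by positivity
  -- `c₁ * sqrt(vol) ≤ 1`
  have hcv : K * c₁ * (γ/2 * γ^ε) ^ ((1:ℝ)/2) ≤ K := by
    have hle : γ/2 * γ^ε ≤ γ ^ (1+ε) := by
      rw [Real.rpow_add hγ0, Real.rpow_one]
      nlinarith
    have h1 : (γ/2 * γ^ε) ^ ((1:ℝ)/2) ≤ (γ ^ (1+ε)) ^ ((1:ℝ)/2) :=
      Real.rpow_le_rpow hv0 hle (by norm_num)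
    have h2 : (γ ^ (1+ε)) ^ ((1:ℝ)/2) = γ ^ ((1+ε)/2) := by
      rw [← Real.rpow_mul hγ0.le]; ring_nf
    have h3 : c₁ * γ ^ ((1+ε)/2) = 1 := by
      rw [hc₁def, ← Real.rpow_add hγ0]; simp
    calc K * c₁ * (γ/2 * γ^ε) ^ ((1:ℝ)/2) ≤ K * c₁ * γ ^ ((1+ε)/2) := by
          have := h1.trans_eq h2
          have hKc : 0 ≤ K * c₁ := by positivity
          exact mul_le_mul_of_nonneg_left this hKc
      _ = K * (c₁ * γ ^ ((1+ε)/2)) := by ring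
      _ = K := by rw [h3, mul_one]
  -- the four piece estimates
  have hp1 : eLpNorm (S₁.indicator fun ζ => wgt α s ζ * c₁) 2 volume ≤ ENNReal.ofReal K := by
    refine piece α s c₁ (K*c₁) K S₁ hS₁m (by positivity) ?_ (γ/2 * γ^ε) hv0 ?_ hcv
    · intro ζ hζ
      rw [abs_of_nonneg (mul_nonneg (wgt_nonneg α s ζ) hc₁0.le)]
      exact mul_le_mul_of_nonneg_right (hwb1 ζ hζ) hc₁0.le
    · rw [hS₁def, vol_Icc_prod _ _ _ _ (by linarith) (by linarith)]
      congr 1; ring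
  have hp2 : eLpNorm ((-S₁).indicator fun ζ => wgt α s ζ * c₁) 2 volume ≤ ENNReal.ofReal K := by
    refine piece α s c₁ (K*c₁) K (-S₁) hS₁m.neg (by positivity) ?_ (γ/2 * γ^ε) hv0 ?_ hcv
    · intro ζ hζ
      rw [abs_of_nonneg (mul_nonneg (wgt_nonneg α s ζ) hc₁0.le)]
      have h : wgt α s ζ ≤ K := by
        rw [← wgt_neg α s ζ]; exact hwb1 (-ζ) (Set.mem_neg.mp hζ)
      exact mul_le_mul_of_nonneg_right h hc₁0.le
    · rw [hS₁def, neg_Icc_prod, vol_Icc_prod _ _ _ _ (by linarith) (by linarith)]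
      congr 1; ring
  have hp3 : eLpNorm (S₂.indicator fun ζ => wgt α s ζ * (c₁ * n)) 2 volume
      ≤ ENNReal.ofReal K := by
    refine piece α s (c₁*n) (K*c₁) K S₂ hS₂m (by positivity) ?_ (γ/2 * γ^ε) hv0 ?_ hcv
    · intro ζ hζ
      rw [abs_of_nonneg (mul_nonneg (wgt_nonneg α s ζ) (by positivity))]
      calc wgt α s ζ * (c₁ * n) = (wgt α s ζ * n) * c₁ := by ring
        _ ≤ K * c₁ := mul_le_mul_of_nonneg_right (hwb2 ζ hζ) hc₁0.le
    · rw [hS₂def, vol_Icc_prod _ _ _ _ (by linarith) (by linarith)]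
      congr 1; ring
  have hp4 : eLpNorm ((-S₂).indicator fun ζ => wgt α s ζ * (c₁ * n)) 2 volume
      ≤ ENNReal.ofReal K := by
    refine piece α s (c₁*n) (K*c₁) K (-S₂) hS₂m.neg (by positivity) ?_ (γ/2 * γ^ε) hv0 ?_ hcv
    · intro ζ hζ
      rw [abs_of_nonneg (mul_nonneg (wgt_nonneg α s ζ) (by positivity))]
      have h : wgt α s ζ * n ≤ K := by
        rw [← wgt_neg α s ζ]; exact hwb2 (-ζ) (Set.mem_neg.mp hζ)
      calc wgt α s ζ * (c₁ * n) = (wgt α s ζ * n) * c₁ := by ring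
        _ ≤ K * c₁ := mul_le_mul_of_nonneg_right h hc₁0.le
    · rw [hS₂def, neg_Icc_prod, vol_Icc_prod _ _ _ _ (by linarith) (by linarith)]
      congr 1; ring
  -- measurability of the pieces
  have m1 : AEStronglyMeasurable (S₁.indicator fun ζ => wgt α s ζ * c₁) volume :=
    (((wgt_meas α s).mul measurable_const).indicator hS₁m).aestronglyMeasurable
  have m2 : AEStronglyMeasurable ((-S₁).indicator fun ζ => wgt α s ζ * c₁) volume :=
    (((wgt_meas α s).mul measurable_const).indicator hS₁m.neg).aestronglyMeasurable
  have m3 : AEStronglyMeasurable (S₂.indicator fun ζ => wgt α s ζ * (c₁ * n)) volume :=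
    (((wgt_meas α s).mul measurable_const).indicator hS₂m).aestronglyMeasurable
  have m4 : AEStronglyMeasurable ((-S₂).indicator fun ζ => wgt α s ζ * (c₁ * n)) volume :=
    (((wgt_meas α s).mul measurable_const).indicator hS₂m.neg).aestronglyMeasurable
  -- triangle inequality and conclusion
  calc eLpNorm ((S₁.indicator fun ζ => wgt α s ζ * c₁)
        + ((-S₁).indicator fun ζ => wgt α s ζ * c₁)
        + ((S₂.indicator fun ζ => wgt α s ζ * (c₁ * n))
            + ((-S₂).indicator fun ζ => wgt α s ζ * (c₁ * n)))) 2 volume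
      ≤ eLpNorm ((S₁.indicator fun ζ => wgt α s ζ * c₁)
          + ((-S₁).indicator fun ζ => wgt α s ζ * c₁)) 2 volume
        + eLpNorm ((S₂.indicator fun ζ => wgt α s ζ * (c₁ * n))
            + ((-S₂).indicator fun ζ => wgt α s ζ * (c₁ * n))) 2 volume :=
        eLpNorm_add_le (m1.add m2) (m3.add m4) one_le_two
    _ ≤ (eLpNorm (S₁.indicator fun ζ => wgt α s ζ * c₁) 2 volume
          + eLpNorm ((-S₁).indicator fun ζ => wgt α s ζ * c₁) 2 volume)
        + (eLpNorm (S₂.indicator fun ζ => wgt α s ζ * (c₁ * n)) 2 volume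
          + eLpNorm ((-S₂).indicator fun ζ => wgt α s ζ * (c₁ * n)) 2 volume) :=
        add_le_add (eLpNorm_add_le m1 m2 one_le_two) (eLpNorm_add_le m3 m4 one_le_two)
    _ ≤ (ENNReal.ofReal K + ENNReal.ofReal K) + (ENNReal.ofReal K + ENNReal.ofReal K) :=
        add_le_add (add_le_add hp1 hp2) (add_le_add hp3 hp4)
    _ = ENNReal.ofReal (4*K) := by
        rw [← ENNReal.ofReal_add hK0.le hK0.le,
          ← ENNReal.ofReal_add (by positivity) (by positivity)]
        congr 1
        ring
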